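/- arXiv:2107.00461 — 2 statements merged into one kernel-verified Lean document; each statement's English description precedes it below -/
import Mathlib

section
/- Let A and B be (possibly empty) finite sequences of positive integers and let x be a positive integer. Then ⟨A, x, B⟩ ≥ (x/4)·⟨A, 1, B⟩, where (A, x, B) denotes the concatenation of A, the single element x, and B. -/
/-- Head-recursion continuant helper. -/
def contAux : List ℕ → ℕ
  | [] => 1
  | [a] => a
  | a :: b :: l => a * contAux (b :: l) + contAux l

/-- The continuant `⟨a_1,…,a_t⟩`, satisfying `⟨⟩ = 1`, `⟨a⟩ = a` and
`⟨a_1,…,a_t⟩ = a_t⟨a_1,…,a_{t-1}⟩ + ⟨a_1,…,a_{t-2}⟩`. -/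
def cont (l : List ℕ) : ℕ := contAux l.reverse

noncomputable def Phi : ℝ := (1 + Real.sqrt 5) / 2

def contD : List ℕ → ℕ
  | [] => 0
  | [_] => 1
  | a :: b :: l => a * contD (b :: l) + contD l

def contd : List ℕ → ℕ
  | [] => 0
  | _ :: l => contAux l

lemma contAux_cons (a : ℕ) (v : List ℕ) :
    contAux (a :: v) = a * contAux v + contd v := by
  cases v <;> simp [contAux, contd]

lemma contAux_append (u v : List ℕ) :
    contAux (u ++ v) = contAux u * contAux v + contD u * contd v := by
  induction u using contAux.induct with
  | case1 => simp [contAux, contD]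
  | case2 a => rw [List.singleton_append, contAux_cons]; simp [contAux, contD]
  | case3 a b l ih1 ih2 =>
    have : (a :: b :: l) ++ v = a :: b :: (l ++ v) := rfl
    rw [List.cons_append] at ih1
    rw [this, contAux, ih1, ih2, contAux, contD]
    ring

lemma one_le_contAux (l : List ℕ) (hl : ∀ b ∈ l, 0 < b) : 1 ≤ contAux l := by
  induction l using contAux.induct with
  | case1 => simp [contAux]
  | case2 a => simp only [contAux]; exact hl a (by simp)
  | case3 a b l ih1 ih2 =>
    have ha : 1 ≤ a := hl a (by simp)
    have h1 := ih1 (fun x hx => hl x (by simp [hx]))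
    calc 1 ≤ a * contAux (b :: l) := Nat.one_le_iff_ne_zero.2 (by positivity)
    _ ≤ contAux (a :: b :: l) := by rw [contAux]; omega

lemma contD_le_contAux (l : List ℕ) (hl : ∀ b ∈ l, 0 < b) : contD l ≤ contAux l := by
  induction l using contAux.induct with
  | case1 => simp [contAux, contD]
  | case2 a => simp only [contAux, contD]; exact hl a (by simp)
  | case3 a b l ih1 ih2 =>
    have h1 := ih1 (fun x hx => hl x (by simp [hx]))
    have h2 := ih2 (fun x hx => hl x (by simp [hx]))
    rw [contAux, contD]
    exact Nat.add_le_add (Nat.mul_le_mul_left a h1) h2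

lemma contd_le_contAux (l : List ℕ) (hl : ∀ b ∈ l, 0 < b) : contd l ≤ contAux l := by
  cases l with
  | nil => simp [contAux, contd]
  | cons a m =>
    have ha : 1 ≤ a := hl a (by simp)
    rw [contd, contAux_cons]
    calc contAux m = 1 * contAux m := (one_mul _).symm
    _ ≤ a * contAux m + contd m := by
        exact le_trans (Nat.mul_le_mul_right _ ha) (Nat.le_add_right _ _)

/-- For sequences `A, B` of positive integers and a positive integer `x`,
`⟨A, x, B⟩ ≥ (x/4) ⟨A, 1, B⟩`. -/
theorem stmt5 (A B : List ℕ) (hA : ∀ b ∈ A, 0 < b) (hB : ∀ b ∈ B, 0 < b)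
    (x : ℕ) (hx : 0 < x) :
    (cont (A ++ x :: B) : ℝ) ≥ (x : ℝ) / 4 * (cont (A ++ 1 :: B) : ℝ) := by
  have hAr : ∀ b ∈ A.reverse, 0 < b := fun b hb => hA b (List.mem_reverse.1 hb)
  have hBr : ∀ b ∈ B.reverse, 0 < b := fun b hb => hB b (List.mem_reverse.1 hb)
  have key : ∀ y : ℕ, cont (A ++ y :: B) =
      contAux B.reverse * (y * contAux A.reverse + contd A.reverse)
        + contD B.reverse * contAux A.reverse := by
    intro y
    have h1 : (A ++ y :: B).reverse = B.reverse ++ y :: A.reverse := by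
      simp
    rw [cont, h1, contAux_append, contAux_cons, contd]
  set Ca := contAux A.reverse with hCa
  set Cb := contAux B.reverse with hCb
  have hCa1 : 1 ≤ Ca := one_le_contAux _ hAr
  have hCb1 : 1 ≤ Cb := one_le_contAux _ hBr
  have hda : contd A.reverse ≤ Ca := contd_le_contAux _ hAr
  have hDu : contD B.reverse ≤ Cb := contD_le_contAux _ hBr
  have hnat : x * cont (A ++ 1 :: B) ≤ 4 * cont (A ++ x :: B) := by
    rw [key x, key 1]
    set da := contd A.reverse
    set Du := contD B.reverse
    nlinarith [Nat.mul_le_mul (le_refl (x * Cb)) hda,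
      Nat.mul_le_mul (Nat.mul_le_mul (le_refl x) hDu) (le_refl Ca),
      Nat.one_le_iff_ne_zero.1 hx, Nat.mul_le_mul hCa1 hCb1]
  have hR : (x : ℝ) * (cont (A ++ 1 :: B) : ℝ) ≤ 4 * (cont (A ++ x :: B) : ℝ) := by
    exact_mod_cast hnat
  rw [ge_iff_le, div_mul_eq_mul_div, div_le_iff₀ (by norm_num : (0:ℝ) < 4)]
  linarith
end

section
/- Let x ∈ (0,1) be irrational and suppose the derivative ?'(x) of the Minkowski question-mark function exists at x and equals 0. Write φ_x(t) = S_x(t) − κ₁·t. Then there exists T such that for all integers t > s > T one has max_{1 ≤ u ≤ t} φ_x(u) ≥ |φ_x(t) − φ_x(s)|. -/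
open Filter Topology

/-- `S_x(t) = a_1 + ⋯ + a_t` where `a i` denotes `a_{i+1}`. -/
def cfSum (a : ℕ → ℕ) (t : ℕ) : ℕ := ∑ i ∈ Finset.range t, a i

/-- `x = [0;a_1,a_2,…]`: all partial quotients are positive and the convergents
`⟨a_2,…,a_t⟩ / ⟨a_1,…,a_t⟩` tend to `x`. -/
def IsCFOf (x : ℝ) (a : ℕ → ℕ) : Prop :=
  (∀ i, 0 < a i) ∧
  Filter.Tendsto
    (fun t => ((cont (((List.range t).map a).tail) : ℝ) / (cont ((List.range t).map a) : ℝ)))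
    Filter.atTop (nhds x)

noncomputable def kappa1 : ℝ := 2 * Real.log Phi / Real.log 2
noncomputable def kappa4 : ℝ := Real.sqrt ((kappa1 - 1) / Real.log 2)

/-- `Q` is the Minkowski question-mark function: continuous and strictly increasing on `[0,1]`,
`Q 0 = 0`, `Q 1 = 1`, and given on irrationals by the Denjoy–Salem series. -/
def IsMinkowski (Q : ℝ → ℝ) : Prop :=
  ContinuousOn Q (Set.Icc 0 1) ∧ StrictMonoOn Q (Set.Icc 0 1) ∧
  Q 0 = 0 ∧ Q 1 = 1 ∧
  ∀ x ∈ Set.Ioo (0:ℝ) 1, Irrational x → ∀ a : ℕ → ℕ, IsCFOf x a →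
    Q x = ∑' k : ℕ, (-1 : ℝ) ^ k * (2 : ℝ) ^ ((1 : ℤ) - (cfSum a (k+1) : ℤ))

namespace CF

def qq (a : ℕ → ℕ) : ℕ → ℕ
  | 0 => 1
  | 1 => a 0
  | (n+2) => a (n+1) * qq a (n+1) + qq a n

def pp (a : ℕ → ℕ) : ℕ → ℕ
  | 0 => 0
  | 1 => 1
  | (n+2) => a (n+1) * pp a (n+1) + pp a n

lemma rev_range_succ (a : ℕ → ℕ) (n : ℕ) :
    (((List.range (n+1)).map a).reverse) = a n :: ((List.range n).map a).reverse := by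
  rw [List.range_succ, List.map_append, List.reverse_append]
  simp

lemma cont_eq_qq (a : ℕ → ℕ) : ∀ t, cont ((List.range t).map a) = qq a t := by
  have key : ∀ t, contAux (((List.range t).map a).reverse) = qq a t := by
    intro t
    induction t using Nat.strong_induction_on with
    | _ t ih =>
      match t with
      | 0 => rfl
      | 1 => simp [rev_range_succ, contAux, qq]
      | (n+2) =>
        rw [rev_range_succ, rev_range_succ]
        show a (n+1) * contAux (a n :: ((List.range n).map a).reverse) + _ = _
        rw [← rev_range_succ, ih (n+1) (by omega), ih n (by omega)]
        rfl
  exact key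

lemma tail_range_map (a : ℕ → ℕ) (n : ℕ) :
    (((List.range (n+1)).map a).tail) = (List.range n).map (fun i => a (i+1)) := by
  rw [List.range_succ_eq_map]
  simp [Function.comp_def]

lemma pp_succ_eq_qq_shift (a : ℕ → ℕ) : ∀ t, pp a (t+1) = qq (fun i => a (i+1)) t := by
  intro t
  induction t using Nat.strong_induction_on with
  | _ t ih =>
    match t with
    | 0 => rfl
    | 1 => simp [pp, qq]
    | (n+2) =>
      show a (n+2) * pp a (n+2) + pp a (n+1) = _
      rw [ih (n+1) (by omega), ih n (by omega)]
      rfl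

lemma cont_tail_eq_pp (a : ℕ → ℕ) (t : ℕ) :
    cont (((List.range (t+1)).map a).tail) = pp a (t+1) := by
  rw [tail_range_map, cont_eq_qq, pp_succ_eq_qq_shift]

section pos
variable {a : ℕ → ℕ} (ha : ∀ i, 0 < a i)
include ha

lemma qq_pos (n : ℕ) : 0 < qq a n := by
  induction n using Nat.strong_induction_on with
  | _ n ih =>
    match n with
    | 0 => exact one_pos
    | 1 => exact ha 0
    | (n+2) =>
      have h2 := ih n (by omega)
      have := ha (n+1)
      show 0 < a (n+1) * qq a (n+1) + qq a n
      positivity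

lemma qq_le_succ : ∀ n, qq a n ≤ qq a (n+1)
  | 0 => ha 0
  | (n+1) => by
      have := qq_pos ha n
      show qq a (n+1) ≤ a (n+1) * qq a (n+1) + qq a n
      nlinarith [ha (n+1), qq_pos ha (n+1)]

lemma add_le_qq (n : ℕ) : qq a n + qq a (n+1) ≤ qq a (n+2) := by
  show _ ≤ a (n+1) * qq a (n+1) + qq a n
  nlinarith [ha (n+1), qq_pos ha (n+1)]

lemma two_qq_le (n : ℕ) : 2 * qq a n ≤ qq a (n+2) := by
  have h1 := add_le_qq ha n
  have h2 := qq_le_succ ha n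
  omega

lemma two_qq_lt (n : ℕ) : 2 * qq a (n+1) < qq a (n+3) := by
  have h1 : qq a (n+1) + qq a (n+2) ≤ qq a (n+3) := add_le_qq ha (n+1)
  have h2 : qq a n + qq a (n+1) ≤ qq a (n+2) := add_le_qq ha n
  have h3 := qq_pos ha n
  omega

omit ha in
lemma det (n : ℕ) : (pp a (n+1) : ℤ) * qq a n - pp a n * qq a (n+1) = (-1)^n := by
  induction n with
  | zero => simp [pp, qq]
  | succ n ih =>
      have e1 : pp a (n+2) = a (n+1) * pp a (n+1) + pp a n := rfl
      have e2 : qq a (n+2) = a (n+1) * qq a (n+1) + qq a n := rfl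
      push_cast [e1, e2, pow_succ]
      push_cast at ih
      nlinarith [ih]

end pos

noncomputable def d (a : ℕ → ℕ) (n : ℕ) : ℝ := (-1)^n / ((qq a n : ℝ) * (qq a (n+1) : ℝ))
noncomputable def c (a : ℕ → ℕ) (n : ℕ) : ℝ := (pp a n : ℝ) / (qq a n : ℝ)
noncomputable def Lim (a : ℕ → ℕ) : ℝ := ∑' n, d a n

section reals
variable {a : ℕ → ℕ} (ha : ∀ i, 0 < a i)
include ha

lemma qqR_pos (n : ℕ) : (0:ℝ) < (qq a n : ℝ) := by exact_mod_cast qq_pos ha n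

lemma abs_d (n : ℕ) : |d a n| = 1 / ((qq a n : ℝ) * (qq a (n+1))) := by
  have h1 := qqR_pos ha n
  have h2 := qqR_pos ha (n+1)
  rw [d, abs_div, abs_pow, abs_neg, abs_one, one_pow, abs_of_pos (by positivity)]

lemma d_pos_even (n : ℕ) (hn : Even n) : 0 < d a n := by
  have h1 := qqR_pos ha n
  have h2 := qqR_pos ha (n+1)
  rw [d, hn.neg_one_pow]
  positivity

lemma c_succ_sub (n : ℕ) : c a (n+1) - c a n = d a n := by
  have h1 := (qqR_pos ha n).ne'
  have h2 := (qqR_pos ha (n+1)).ne'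
  have hdet := det (a := a) n
  have hdetR : (pp a (n+1) : ℝ) * qq a n - pp a n * qq a (n+1) = (-1)^n := by
    exact_mod_cast hdet
  rw [c, c, d, div_sub_div _ _ h2 h1, ← hdetR]
  ring_nf

lemma c_eq_sum (n : ℕ) : c a n = ∑ k ∈ Finset.range n, d a k := by
  induction n with
  | zero => simp [c, qq, pp]
  | succ n ih =>
      rw [Finset.sum_range_succ, ← ih, ← c_succ_sub ha n]; ring

lemma abs_d_succ_le (n : ℕ) : |d a (n+1)| ≤ |d a n| / 2 := by
  rw [abs_d ha, abs_d ha, div_div]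
  apply one_div_le_one_div_of_le
  · have h2 := qqR_pos ha (n+1)
    have h3 := qqR_pos ha n
    positivity
  · have h : (2:ℝ) * qq a n ≤ qq a (n+2) := by exact_mod_cast two_qq_le ha n
    have h2 := qqR_pos ha (n+1)
    have h3 := qqR_pos ha n
    have h4 : ((qq a (n+1+1)) : ℝ) = qq a (n+2) := by norm_num
    rw [h4]
    nlinarith

lemma abs_d_add_le (n k : ℕ) : |d a (n+k)| ≤ |d a n| / 2^k := by
  induction k with
  | zero => simp
  | succ k ih =>
      calc |d a (n+(k+1))| ≤ |d a (n+k)| / 2 := abs_d_succ_le ha (n+k)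
        _ ≤ (|d a n| / 2^k) / 2 := by linarith
        _ = |d a n| / 2^(k+1) := by ring

lemma summable_abs_d : Summable (fun n => |d a n|) := by
  have hg2 : Summable (fun n : ℕ => |d a 0| / 2 ^ n) :=
    (summable_geometric_two' (|d a 0| * 2)).congr (fun n => by ring)
  exact Summable.of_nonneg_of_le (fun n => abs_nonneg _)
    (fun n => by simpa using abs_d_add_le ha 0 n) hg2

lemma summable_d : Summable (d a) := (summable_abs_d ha).of_abs

lemma summable_d_shift (n : ℕ) : Summable (fun k => d a (k + n)) :=
  ((summable_nat_add_iff (f := d a) n).2 (summable_d ha))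

lemma tendsto_c : Tendsto (c a) atTop (𝓝 (Lim a)) := by
  have := (summable_d ha).hasSum.tendsto_sum_nat
  exact this.congr (fun n => (c_eq_sum ha n).symm)

lemma Lim_sub_c (n : ℕ) : Lim a - c a n = ∑' k, d a (k + n) := by
  have h := Summable.sum_add_tsum_nat_add (f := d a) n (summable_d ha)
  rw [Lim, ← h, c_eq_sum ha]; ring

lemma tsum_tail_abs_le (n : ℕ) : |∑' k, d a (k + n)| ≤ 2 * |d a n| := by
  have hs : Summable (fun k => |d a (k + n)|) :=
    (summable_nat_add_iff (f := fun m => |d a m|) n).2 (summable_abs_d ha)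
  have h1 : ‖∑' k, d a (k+n)‖ ≤ ∑' k, ‖d a (k+n)‖ :=
    norm_tsum_le_tsum_norm (by simpa only [Real.norm_eq_abs] using hs)
  calc |∑' k, d a (k + n)| ≤ ∑' k, |d a (k + n)| := by
        simpa only [Real.norm_eq_abs] using h1
    _ ≤ ∑' k : ℕ, (2 * |d a n|) / 2 / 2^k := by
        apply Summable.tsum_le_tsum (fun k => ?_) hs (summable_geometric_two' _)
        calc |d a (k+n)| = |d a (n+k)| := by rw [Nat.add_comm]
          _ ≤ |d a n| / 2^k := abs_d_add_le ha n k
          _ = (2 * |d a n|) / 2 / 2 ^ k := by ring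
    _ = 2 * |d a n| := tsum_geometric_two' _

lemma abs_Lim_sub_c (n : ℕ) : |Lim a - c a n| ≤ 2 * |d a n| := by
  rw [Lim_sub_c ha]; exact tsum_tail_abs_le ha n


lemma le_qq (n : ℕ) : n ≤ qq a n := by
  induction n using Nat.strong_induction_on with
  | _ n ih =>
    match n with
    | 0 => exact Nat.zero_le _
    | 1 => exact ha 0
    | (n+2) =>
      have h1 : qq a n + qq a (n+1) ≤ qq a (n+2) := add_le_qq ha n
      have h2 := ih (n+1) (by omega)
      have h3 := qq_pos ha n
      omega

lemma d_ne_zero (n : ℕ) : d a n ≠ 0 := by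
  have h := abs_d ha n
  have h1 := qqR_pos ha n
  have h2 := qqR_pos ha (n+1)
  intro hc
  rw [hc, abs_zero] at h
  have : (0:ℝ) < 1 / ((qq a n : ℝ) * (qq a (n+1))) := by positivity
  linarith

lemma eq_c_of_rat (r : ℚ) (h : Lim a = (r : ℝ)) (n : ℕ) (hn : 2 * (r.den : ℕ) < qq a (n+1)) :
    Lim a = c a n := by
  by_contra hne
  have hq := qqR_pos ha n
  have hq1 := qqR_pos ha (n+1)
  have hden : (0:ℝ) < (r.den : ℝ) := by exact_mod_cast r.pos
  set D : ℤ := r.num * qq a n - pp a n * r.den with hD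
  have hrcast : (r : ℝ) = (r.num : ℝ) / (r.den : ℝ) := by rw [Rat.cast_def]
  have hdiff : (r : ℝ) - c a n = (D : ℝ) / ((r.den : ℝ) * qq a n) := by
    rw [hrcast, c, hD]
    push_cast
    field_simp
  have hDne : D ≠ 0 := by
    intro h0
    apply hne
    rw [h]
    have h2 := hdiff
    rw [h0] at h2
    norm_num at h2
    linarith
  have hDabs : (1:ℝ) ≤ |(D:ℝ)| := by
    have : (1:ℤ) ≤ |D| := Int.one_le_abs hDne
    exact_mod_cast this
  have hlow : 1 / ((r.den : ℝ) * qq a n) ≤ |Lim a - c a n| := by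
    rw [h, hdiff, abs_div, abs_of_pos (show (0:ℝ) < (r.den:ℝ) * qq a n by positivity)]
    gcongr
  have hup : |Lim a - c a n| ≤ 2 / ((qq a n : ℝ) * qq a (n+1)) := by
    calc |Lim a - c a n| ≤ 2 * |d a n| := abs_Lim_sub_c ha n
      _ = 2 / ((qq a n : ℝ) * qq a (n+1)) := by rw [abs_d ha]; ring
  have hcomb := hlow.trans hup
  rw [div_le_div_iff₀ (by positivity) (by positivity)] at hcomb
  have : (qq a (n+1) : ℝ) ≤ 2 * r.den := by nlinarith
  have h2 : (2 * (r.den:ℕ) : ℝ) < (qq a (n+1) : ℝ) := by exact_mod_cast hn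
  push_cast at h2
  linarith

lemma irrational_Lim : Irrational (Lim a) := by
  rw [Irrational]
  rintro ⟨r, hr⟩
  set n : ℕ := 2 * r.den + 1 with hn
  have hb1 : 2 * r.den < qq a (n+1) := by
    have := le_qq ha (n+1); omega
  have hb2 : 2 * r.den < qq a (n+1+1) := by
    have := le_qq ha (n+1+1); omega
  have e1 := eq_c_of_rat ha r hr.symm n hb1
  have e2 := eq_c_of_rat ha r hr.symm (n+1) hb2
  have : d a n = 0 := by
    rw [← c_succ_sub ha n, ← e1, ← e2]; ring
  exact d_ne_zero ha n this

lemma Lim_sub_c_expand (n : ℕ) : Lim a = c a n + d a n + ∑' i, d a (i + (n+1)) := by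
  have h1 := Lim_sub_c ha n
  have h2 := Summable.sum_add_tsum_nat_add (f := fun k => d a (k + n)) 1 (summable_d_shift ha n)
  simp only [Finset.range_one, Finset.sum_singleton, Nat.zero_add] at h2
  have h3 : ∑' i, d a (i + 1 + n) = ∑' i, d a (i + (n+1)) := by
    apply tsum_congr; intro i; congr 1; omega
  rw [h3] at h2
  linarith [h1, h2]

lemma Lim_pos : 0 < Lim a := by
  have he := Lim_sub_c_expand ha 2
  have htail : |∑' i, d a (i + 3)| ≤ 2 * |d a 3| := tsum_tail_abs_le ha 3
  have hd2 : 0 < d a 2 := d_pos_even ha 2 (by norm_num)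
  have hd3 : |d a 3| ≤ |d a 2| / 2 := abs_d_succ_le ha 2
  have habs : |d a 2| = d a 2 := abs_of_pos hd2
  have hc2 : 0 < c a 2 := by
    rw [c]
    have h1 := qqR_pos ha 2
    have h2 : 0 < (pp a 2 : ℝ) := by
      have : pp a 2 = a 1 * 1 + 0 := rfl
      rw [this]
      have := ha 1
      positivity
    positivity
  have := abs_le.1 htail
  rw [he]
  linarith

lemma Lim_lt_one : Lim a < 1 := by
  have he := Lim_sub_c_expand ha 1
  have htail : |∑' i, d a (i + 2)| ≤ 2 * |d a 2| := tsum_tail_abs_le ha 2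
  have hq1 := qqR_pos ha 1
  have hq2 := qqR_pos ha 2
  have hq3 := qqR_pos ha 3
  have hd1 : d a 1 = -(1 / ((qq a 1 : ℝ) * qq a 2)) := by
    rw [d]; norm_num; ring
  have hd2 : |d a 2| = 1 / ((qq a 2 : ℝ) * qq a 3) := abs_d ha 2
  have hkey : 2 * |d a 2| < 1 / ((qq a 1 : ℝ) * qq a 2) := by
    rw [hd2, mul_one_div, div_lt_div_iff₀ (by positivity) (by positivity)]
    have h : 2 * qq a 1 < qq a 3 := two_qq_lt ha 0
    have hR : 2 * (qq a 1 : ℝ) < qq a 3 := by exact_mod_cast h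
    nlinarith
  have hc1 : c a 1 ≤ 1 := by
    rw [c]
    have : pp a 1 = 1 := rfl
    rw [this]
    have h1 : (1:ℝ) ≤ qq a 1 := by exact_mod_cast qq_pos ha 1
    push_cast
    rw [div_le_one (by linarith)]
    linarith
  have := abs_le.1 htail
  rw [he]
  linarith

lemma Lim_mem_Ioo : Lim a ∈ Set.Ioo (0:ℝ) 1 := ⟨Lim_pos ha, Lim_lt_one ha⟩

lemma isCFOf_Lim : IsCFOf (Lim a) a := by
  refine ⟨ha, ?_⟩
  have hc := tendsto_c ha
  have hshift : Tendsto (fun t : ℕ => c a t) atTop (𝓝 (Lim a)) := hc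
  apply hshift.congr'
  filter_upwards [eventually_ge_atTop 1] with t ht
  obtain ⟨n, rfl⟩ := Nat.exists_eq_add_of_le' ht
  rw [cont_tail_eq_pp, cont_eq_qq]
  rfl

lemma eq_Lim_of_isCFOf {x : ℝ} (hx : IsCFOf x a) : x = Lim a :=
  tendsto_nhds_unique hx.2 (isCFOf_Lim ha).2

lemma abs_Lim_sub_c_le (n : ℕ) : |Lim a - c a n| ≤ 2 / ((qq a n : ℝ))^2 := by
  have h1 := abs_Lim_sub_c ha n
  have h2 : (qq a n : ℝ) ≤ qq a (n+1) := by exact_mod_cast qq_le_succ ha n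
  have hq := qqR_pos ha n
  calc |Lim a - c a n| ≤ 2 * |d a n| := h1
    _ = 2 / ((qq a n : ℝ) * qq a (n+1)) := by rw [abs_d ha]; ring
    _ ≤ 2 / ((qq a n : ℝ))^2 := by
        apply div_le_div_of_nonneg_left (by norm_num) (by positivity)
        nlinarith


end reals

lemma qq_congr {a b : ℕ → ℕ} (n : ℕ) (h : ∀ i < n, a i = b i) : qq a n = qq b n := by
  induction n using Nat.strong_induction_on with
  | _ n ih =>
    match n with
    | 0 => rfl
    | 1 => exact h 0 one_pos
    | (n+2) =>
      show a (n+1) * qq a (n+1) + qq a n = b (n+1) * qq b (n+1) + qq b n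
      rw [h (n+1) (by omega), ih (n+1) (by omega) (fun i hi => h i (by omega)),
        ih n (by omega) (fun i hi => h i (by omega))]

lemma one_lt_phi : (1:ℝ) < Phi := by
  rw [Phi]
  nlinarith [Real.sq_sqrt (by norm_num : (5:ℝ) ≥ 0), Real.sqrt_nonneg 5,
    Real.sqrt_le_sqrt (by norm_num : (4:ℝ) ≤ 5)]

lemma phi_pos : (0:ℝ) < Phi := lt_trans one_pos one_lt_phi

lemma phi_sq : Phi^2 = Phi + 1 := by
  rw [Phi]
  nlinarith [Real.sq_sqrt (by norm_num : (5:ℝ) ≥ 0)]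

lemma phi_pow_le {a : ℕ → ℕ} (ha : ∀ i, 0 < a i) (n : ℕ) :
    Phi ^ n ≤ Phi * (qq a n : ℝ) := by
  induction n using Nat.strong_induction_on with
  | _ n ih =>
    match n with
    | 0 =>
      have h0 : qq a 0 = 1 := rfl
      rw [h0, pow_zero]
      push_cast
      nlinarith [one_lt_phi]
    | 1 =>
      have h1 : (1:ℝ) ≤ (qq a 1 : ℝ) := by exact_mod_cast qq_pos ha 1
      calc Phi ^ 1 = Phi * 1 := by ring
        _ ≤ Phi * (qq a 1 : ℝ) := by nlinarith [phi_pos]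
    | (n+2) =>
      have h1 := ih (n+1) (by omega)
      have h2 := ih n (by omega)
      have hadd : (qq a n : ℝ) + qq a (n+1) ≤ qq a (n+2) := by
        exact_mod_cast add_le_qq ha n
      calc Phi ^ (n+2) = Phi^2 * Phi^n := by ring
        _ = Phi^(n+1) + Phi^n := by rw [phi_sq]; ring
        _ ≤ Phi * (qq a (n+1) : ℝ) + Phi * (qq a n : ℝ) := by linarith
        _ = Phi * ((qq a n : ℝ) + qq a (n+1)) := by ring
        _ ≤ Phi * (qq a (n+2) : ℝ) := by nlinarith [phi_pos]

lemma log_qq_ge {a : ℕ → ℕ} (ha : ∀ i, 0 < a i) (n : ℕ) :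
    (n : ℝ) * Real.log Phi - Real.log Phi ≤ Real.log (qq a n : ℝ) := by
  have h := phi_pow_le ha n
  have hq := qqR_pos ha n
  have hlog := Real.log_le_log (pow_pos phi_pos n) h
  rw [Real.log_pow, Real.log_mul (ne_of_gt phi_pos) (ne_of_gt hq)] at hlog
  linarith

lemma cfSum_succ (a : ℕ → ℕ) (n : ℕ) : cfSum a (n+1) = cfSum a n + a n :=
  Finset.sum_range_succ a n

lemma cfSum_add_le {a : ℕ → ℕ} (ha : ∀ i, 0 < a i) (m k : ℕ) :
    cfSum a m + k ≤ cfSum a (m + k) := by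
  induction k with
  | zero => simp
  | succ k ih =>
      have h := ha (m + k)
      have : cfSum a (m + (k+1)) = cfSum a (m+k) + a (m+k) := cfSum_succ a (m+k)
      omega

lemma le_cfSum {a : ℕ → ℕ} (ha : ∀ i, 0 < a i) (m : ℕ) : m ≤ cfSum a m := by
  have := cfSum_add_le ha 0 m
  simpa [cfSum] using this

end CF

namespace CF

lemma cfSum_pos_ge {a : ℕ → ℕ} (ha : ∀ i, 0 < a i) (k : ℕ) : k + 1 ≤ cfSum a (k+1) :=
  le_cfSum ha (k+1)

lemma summable_D {a : ℕ → ℕ} (ha : ∀ i, 0 < a i) :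
    Summable (fun k : ℕ => (-1 : ℝ) ^ k * (2 : ℝ) ^ ((1 : ℤ) - (cfSum a (k+1) : ℤ))) := by
  apply Summable.of_abs
  apply Summable.of_nonneg_of_le (fun n => abs_nonneg _) (fun k => ?_)
    (summable_geometric_two' 2)
  have h1 : |(-1 : ℝ) ^ k * (2 : ℝ) ^ ((1 : ℤ) - (cfSum a (k+1) : ℤ))|
      = (2 : ℝ) ^ ((1 : ℤ) - (cfSum a (k+1) : ℤ)) := by
    rw [abs_mul, abs_pow, abs_neg, abs_one, one_pow, one_mul,
      abs_of_pos (zpow_pos two_pos _)]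
  rw [h1]
  have h2 : ((1 : ℤ) - (cfSum a (k+1) : ℤ)) ≤ -(k : ℤ) := by
    have := cfSum_pos_ge ha k
    omega
  calc (2 : ℝ) ^ ((1 : ℤ) - (cfSum a (k+1) : ℤ)) ≤ (2:ℝ) ^ (-(k:ℤ)) :=
        zpow_le_zpow_right₀ one_le_two h2
    _ = 2 / 2 / 2 ^ k := by
        rw [zpow_neg, zpow_natCast]
        norm_num

end CF

namespace CF
section keylemma
variable {a : ℕ → ℕ} (ha : ∀ i, 0 < a i) (t : ℕ)

/-- `e t j = 2^{-S(t+1+j)}`. -/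
noncomputable def ee (a : ℕ → ℕ) (t j : ℕ) : ℝ := (2:ℝ) ^ (-(cfSum a (t+1+j) : ℤ))

omit ha in
lemma ee_pos (j : ℕ) : 0 < ee a t j := zpow_pos two_pos _

include ha in
lemma ee_bound (m k : ℕ) : ee a t (m+k) ≤ ee a t m / 2^k := by
  rw [ee, ee]
  have h : (cfSum a (t+1+m) : ℤ) + k ≤ (cfSum a (t+1+(m+k)) : ℤ) := by
    have h2 := cfSum_add_le ha (t+1+m) k
    have h3 : t+1+m+k = t+1+(m+k) := by omega
    rw [h3] at h2
    exact_mod_cast h2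
  calc (2:ℝ) ^ (-(cfSum a (t+1+(m+k)) : ℤ))
      ≤ (2:ℝ) ^ (-((cfSum a (t+1+m) : ℤ) + k)) := zpow_le_zpow_right₀ one_le_two (by omega)
    _ = (2:ℝ) ^ (-(cfSum a (t+1+m) : ℤ)) / 2^k := by
        rw [neg_add, zpow_add₀ (two_ne_zero : (2:ℝ) ≠ 0), zpow_neg (2:ℝ) ((k:ℕ):ℤ),
          zpow_natCast, div_eq_mul_inv]

include ha in
lemma summable_alt_ee : Summable (fun j => (-1:ℝ)^j * ee a t j) := by
  apply Summable.of_abs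
  apply Summable.of_nonneg_of_le (fun n => abs_nonneg _) (fun j => ?_)
    (summable_geometric_two' (2 * ee a t 0))
  have h1 : |(-1 : ℝ) ^ j * ee a t j| = ee a t j := by
    rw [abs_mul, abs_pow, abs_neg, abs_one, one_pow, one_mul, abs_of_pos (ee_pos t j)]
  rw [h1]
  calc ee a t j = ee a t (0 + j) := by rw [Nat.zero_add]
    _ ≤ ee a t 0 / 2^j := ee_bound ha t 0 j
    _ = 2 * ee a t 0 / 2 / 2 ^ j := by ring

include ha in
lemma tsum_alt_ee_ge : ee a t 0 / 2 ≤ ∑' j, (-1:ℝ)^j * ee a t j := by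
  have hsum := summable_alt_ee ha t
  have hsplit := Summable.sum_add_tsum_nat_add (f := fun j => (-1:ℝ)^j * ee a t j) 3 hsum
  have hhead : ∑ i ∈ Finset.range 3, (-1:ℝ)^i * ee a t i
      = ee a t 0 - ee a t 1 + ee a t 2 := by
    rw [Finset.sum_range_succ, Finset.sum_range_succ, Finset.sum_range_succ,
      Finset.sum_range_zero]
    ring
  have htailsummable : Summable (fun j => (-1:ℝ)^(j+3) * ee a t (j+3)) :=
    (summable_nat_add_iff (f := fun j => (-1:ℝ)^j * ee a t j) 3).2 hsum
  have habs_summ : Summable (fun j => |(-1:ℝ)^(j+3) * ee a t (j+3)|) := htailsummable.abs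
  have htail : |∑' j, (-1:ℝ)^(j+3) * ee a t (j+3)| ≤ ee a t 2 := by
    have h1 : ‖∑' j, (-1:ℝ)^(j+3) * ee a t (j+3)‖ ≤ ∑' j, ‖(-1:ℝ)^(j+3) * ee a t (j+3)‖ :=
      norm_tsum_le_tsum_norm (by simpa only [Real.norm_eq_abs] using habs_summ)
    calc |∑' j, (-1:ℝ)^(j+3) * ee a t (j+3)| ≤ ∑' j, |(-1:ℝ)^(j+3) * ee a t (j+3)| := by
          simpa only [Real.norm_eq_abs] using h1
      _ ≤ ∑' j : ℕ, ee a t 2 / 2 / 2^j := by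
          apply Summable.tsum_le_tsum (fun j => ?_) habs_summ (summable_geometric_two' _)
          have h2 : |(-1:ℝ)^(j+3) * ee a t (j+3)| = ee a t (j+3) := by
            rw [abs_mul, abs_pow, abs_neg, abs_one, one_pow, one_mul,
              abs_of_pos (ee_pos t (j+3))]
          rw [h2]
          calc ee a t (j+3) = ee a t (2 + (j+1)) := by congr 1; omega
            _ ≤ ee a t 2 / 2^(j+1) := ee_bound ha t 2 (j+1)
            _ = ee a t 2 / 2 / 2^j := by ring
      _ = ee a t 2 := tsum_geometric_two' _
  have he1 : ee a t 1 ≤ ee a t 0 / 2 := by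
    calc ee a t 1 = ee a t (0+1) := by norm_num
      _ ≤ ee a t 0 / 2^1 := ee_bound ha t 0 1
      _ = ee a t 0 / 2 := by norm_num
  have habs := abs_le.1 htail
  calc ee a t 0 / 2 ≤ ee a t 0 - ee a t 1 + ee a t 2 - ee a t 2 := by linarith
    _ ≤ ∑ i ∈ Finset.range 3, (-1:ℝ)^i * ee a t i + ∑' j, (-1:ℝ)^(j+3) * ee a t (j+3) := by
        rw [hhead]; linarith
    _ = ∑' j, (-1:ℝ)^j * ee a t j := hsplit

end keylemma
end CF

namespace CF

def bmod (a : ℕ → ℕ) (t : ℕ) : ℕ → ℕ := fun i => if i = t then a i + 1 else a i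

lemma bmod_pos {a : ℕ → ℕ} (ha : ∀ i, 0 < a i) (t : ℕ) : ∀ i, 0 < bmod a t i := by
  intro i
  rw [bmod]
  split <;> [omega; exact ha i]

lemma cfSum_bmod (a : ℕ → ℕ) (t m : ℕ) :
    cfSum (bmod a t) m = cfSum a m + (if t < m then 1 else 0) := by
  rw [cfSum, cfSum]
  have : ∀ i, bmod a t i = a i + (if i = t then 1 else 0) := by
    intro i; rw [bmod]; split <;> simp_all
  simp_rw [this, Finset.sum_add_distrib, Finset.sum_ite_eq' (Finset.range m) t (fun _ => 1),
    Finset.mem_range]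

noncomputable def DD (a : ℕ → ℕ) (k : ℕ) : ℝ :=
  (-1 : ℝ) ^ k * (2 : ℝ) ^ ((1 : ℤ) - (cfSum a (k+1) : ℤ))

lemma summable_DD {a : ℕ → ℕ} (ha : ∀ i, 0 < a i) : Summable (DD a) := summable_D ha

lemma DD_sub_eq (a : ℕ → ℕ) (t k : ℕ) :
    DD a k - DD (bmod a t) k
      = if t ≤ k then (-1:ℝ)^k * (2:ℝ)^(-(cfSum a (k+1) : ℤ)) else 0 := by
  rw [DD, DD, cfSum_bmod a t (k+1)]
  by_cases h : t ≤ k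
  · rw [if_pos h, if_pos (by omega : t < k + 1)]
    have he : ((1:ℤ) - ((cfSum a (k+1) + 1 : ℕ) : ℤ)) = -(cfSum a (k+1) : ℤ) := by
      push_cast; ring
    have he2 : ((1:ℤ) - ((cfSum a (k+1) : ℕ) : ℤ)) = -(cfSum a (k+1) : ℤ) + 1 := by
      push_cast; ring
    rw [he, he2, zpow_add₀ (two_ne_zero : (2:ℝ) ≠ 0)]
    ring
  · rw [if_neg h, if_neg (by omega : ¬ t < k + 1)]
    simp

lemma abs_tsum_DD_sub_ge {a : ℕ → ℕ} (ha : ∀ i, 0 < a i) (t : ℕ) :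
    (2:ℝ)^(-(cfSum a (t+1) : ℤ)) / 2 ≤ |∑' k, DD a k - ∑' k, DD (bmod a t) k| := by
  have hsa := summable_DD ha
  have hsb := summable_DD (bmod_pos ha t)
  have hsub : ∑' k, DD a k - ∑' k, DD (bmod a t) k = ∑' k, (DD a k - DD (bmod a t) k) :=
    (Summable.tsum_sub hsa hsb).symm
  set g : ℕ → ℝ := fun k => if t ≤ k then (-1:ℝ)^k * (2:ℝ)^(-(cfSum a (k+1) : ℤ)) else 0
    with hg
  have hgeq : (fun k => DD a k - DD (bmod a t) k) = g := by
    funext k; rw [hg]; exact DD_sub_eq a t k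
  have hsg : Summable g := by rw [← hgeq]; exact hsa.sub hsb
  have hsplit := Summable.sum_add_tsum_nat_add (f := g) t hsg
  have hhead : ∑ i ∈ Finset.range t, g i = 0 := by
    apply Finset.sum_eq_zero
    intro i hi
    rw [hg]
    simp only []
    rw [if_neg (by simp at hi; omega)]
  have hshift : ∀ j : ℕ, g (j + t) = (-1:ℝ)^t * ((-1:ℝ)^j * ee a t j) := by
    intro j
    rw [hg]
    simp only []
    rw [if_pos (by omega : t ≤ j + t), ee]
    have h1 : (-1:ℝ)^(j+t) = (-1:ℝ)^j * (-1:ℝ)^t := pow_add (-1) j t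
    have h2 : j + t + 1 = t + 1 + j := by omega
    rw [h1, h2]
    ring
  have htsum : ∑' k, g k = (-1:ℝ)^t * ∑' j, (-1:ℝ)^j * ee a t j := by
    rw [← hsplit, hhead, zero_add]
    rw [tsum_congr hshift, tsum_mul_left]
  have hA := tsum_alt_ee_ge ha t
  have hepos := ee_pos (a := a) t 0
  have habs : |∑' k, g k| = |∑' j, (-1:ℝ)^j * ee a t j| := by
    rw [htsum, abs_mul, abs_pow, abs_neg, abs_one, one_pow, one_mul]
  have hee0 : ee a t 0 = (2:ℝ)^(-(cfSum a (t+1) : ℤ)) := rfl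
  rw [hsub, hgeq, habs, ← hee0]
  calc ee a t 0 / 2 ≤ ∑' j, (-1:ℝ)^j * ee a t j := hA
    _ ≤ |∑' j, (-1:ℝ)^j * ee a t j| := le_abs_self _

end CF

namespace CF

lemma pp_congr {a b : ℕ → ℕ} (n : ℕ) (h : ∀ i < n, a i = b i) : pp a n = pp b n := by
  induction n using Nat.strong_induction_on with
  | _ n ih =>
    match n with
    | 0 => rfl
    | 1 => rfl
    | (n+2) =>
      show a (n+1) * pp a (n+1) + pp a n = b (n+1) * pp b (n+1) + pp b n
      rw [h (n+1) (by omega), ih (n+1) (by omega) (fun i hi => h i (by omega)),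
        ih n (by omega) (fun i hi => h i (by omega))]

end CF


/-- If `?'(x) = 0`, writing `φ_x(t) = S_x(t) - κ₁ t`, there is `T` such that for all
`t > s > T` one has `max_{1 ≤ u ≤ t} φ_x(u) ≥ |φ_x(t) - φ_x(s)|`. -/
theorem stmt12 (x : ℝ) (hx : x ∈ Set.Ioo (0:ℝ) 1) (hirr : Irrational x)
    (a : ℕ → ℕ) (ha : IsCFOf x a)
    (Q : ℝ → ℝ) (hQ : IsMinkowski Q) (hder : HasDerivAt Q 0 x) :
    ∃ T : ℕ, ∀ t s : ℕ, T < s → s < t →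
      ∃ u : ℕ, 1 ≤ u ∧ u ≤ t ∧
        (cfSum a u : ℝ) - kappa1 * u ≥
          |((cfSum a t : ℝ) - kappa1 * t) - ((cfSum a s : ℝ) - kappa1 * s)| := by
  obtain ⟨hapos, hconv⟩ := ha
  have hxL : x = CF.Lim a := CF.eq_Lim_of_isCFOf hapos ⟨hapos, hconv⟩
  set z : ℕ → ℝ := fun t => CF.Lim (CF.bmod a t) with hzdef
  have hbpos : ∀ t i, 0 < CF.bmod a t i := fun t => CF.bmod_pos hapos t
  have hzCF : ∀ t, IsCFOf (z t) (CF.bmod a t) := fun t => CF.isCFOf_Lim (hbpos t)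
  have hzIoo : ∀ t, z t ∈ Set.Ioo (0:ℝ) 1 := fun t => CF.Lim_mem_Ioo (hbpos t)
  have hzirr : ∀ t, Irrational (z t) := fun t => CF.irrational_Lim (hbpos t)
  have hQx : Q x = ∑' k, CF.DD a k := hQ.2.2.2.2 x hx hirr a ⟨hapos, hconv⟩
  have hQz : ∀ t, Q (z t) = ∑' k, CF.DD (CF.bmod a t) k :=
    fun t => hQ.2.2.2.2 (z t) (hzIoo t) (hzirr t) _ (hzCF t)
  have hqqR : ∀ t : ℕ, (0:ℝ) < (CF.qq a t : ℝ) := CF.qqR_pos hapos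
  -- distance bound
  have hdist : ∀ t, |z t - x| ≤ 4 / (CF.qq a t : ℝ)^2 := by
    intro t
    have hqb_eq : CF.qq (CF.bmod a t) t = CF.qq a t :=
      (CF.qq_congr t (fun i hi => by rw [CF.bmod]; rw [if_neg (by omega)])).symm
    have hpb_eq : CF.pp (CF.bmod a t) t = CF.pp a t :=
      (CF.pp_congr t (fun i hi => by rw [CF.bmod]; rw [if_neg (by omega)])).symm
    have hcb : CF.c (CF.bmod a t) t = CF.c a t := by
      rw [CF.c, CF.c, hqb_eq, hpb_eq]
    have h1 : |z t - CF.c (CF.bmod a t) t| ≤ 2 / (CF.qq (CF.bmod a t) t : ℝ)^2 :=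
      CF.abs_Lim_sub_c_le (hbpos t) t
    rw [hcb, hqb_eq] at h1
    have h2 : |x - CF.c a t| ≤ 2 / (CF.qq a t : ℝ)^2 := by
      rw [hxL]; exact CF.abs_Lim_sub_c_le hapos t
    calc |z t - x| ≤ |z t - CF.c a t| + |CF.c a t - x| := abs_sub_le _ _ _
      _ = |z t - CF.c a t| + |x - CF.c a t| := by rw [abs_sub_comm (CF.c a t) x]
      _ ≤ 2 / (CF.qq a t : ℝ)^2 + 2 / (CF.qq a t : ℝ)^2 := by linarith
      _ = 4 / (CF.qq a t : ℝ)^2 := by ring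
  -- Q difference bound
  have hQdiff : ∀ t, (2:ℝ)^(-(cfSum a (t+1) : ℤ)) / 2 ≤ |Q x - Q (z t)| := by
    intro t
    rw [hQx, hQz t]
    exact CF.abs_tsum_DD_sub_ge hapos t
  have hzne : ∀ t, z t ≠ x := by
    intro t heq
    have h := hQdiff t
    rw [heq, sub_self, abs_zero] at h
    have hp := zpow_pos (two_pos (α := ℝ)) (-(cfSum a (t+1):ℤ))
    linarith
  -- convergence of z to x
  have hqq_atTop : Tendsto (fun t => (CF.qq a t : ℝ)^2) atTop atTop := by
    apply tendsto_atTop_mono (fun t => ?_) tendsto_natCast_atTop_atTop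
    have h1 : (t:ℝ) ≤ (CF.qq a t : ℝ) := by exact_mod_cast CF.le_qq hapos t
    have h2 : (1:ℝ) ≤ (CF.qq a t : ℝ) := by exact_mod_cast CF.qq_pos hapos t
    nlinarith [hqqR t]
  have hzx : Tendsto z atTop (𝓝 x) := by
    have h0 : Tendsto (fun t => 4 / (CF.qq a t : ℝ)^2) atTop (𝓝 0) :=
      Filter.Tendsto.div_atTop tendsto_const_nhds hqq_atTop
    have h2 : Tendsto (fun t => z t - x) atTop (𝓝 0) :=
      squeeze_zero_norm (fun t => by simpa [Real.norm_eq_abs] using hdist t) h0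
    rwa [tendsto_sub_nhds_zero_iff] at h2
  have hz_ne_filter : Tendsto z atTop (𝓝[≠] x) :=
    tendsto_nhdsWithin_iff.2 ⟨hzx, Filter.Eventually.of_forall (fun t => hzne t)⟩
  have hslope0 : Tendsto (fun t => slope Q x (z t)) atTop (𝓝 0) :=
    (hasDerivAt_iff_tendsto_slope.1 hder).comp hz_ne_filter
  -- lower bound on slopes
  have hw : ∀ t, (CF.qq a t : ℝ)^2 * (2:ℝ)^(-(cfSum a (t+1):ℤ)) / 8 ≤ |slope Q x (z t)| := by
    intro t
    rw [slope_def_field, abs_div]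
    have hnum : (2:ℝ)^(-(cfSum a (t+1) : ℤ)) / 2 ≤ |Q (z t) - Q x| := by
      rw [abs_sub_comm]; exact hQdiff t
    have hden_pos : 0 < |z t - x| := abs_pos.2 (sub_ne_zero.2 (hzne t))
    have hden_le : |z t - x| ≤ 4 / (CF.qq a t : ℝ)^2 := hdist t
    have hp := zpow_pos (two_pos (α := ℝ)) (-(cfSum a (t+1):ℤ))
    have hq := hqqR t
    calc (CF.qq a t : ℝ)^2 * (2:ℝ)^(-(cfSum a (t+1):ℤ)) / 8
        = ((2:ℝ)^(-(cfSum a (t+1):ℤ)) / 2) / (4 / (CF.qq a t : ℝ)^2) := by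
          field_simp
          ring
      _ ≤ |Q (z t) - Q x| / |z t - x| :=
          div_le_div₀ (abs_nonneg _) hnum hden_pos hden_le
  have hw0 : Tendsto (fun t => (CF.qq a t : ℝ)^2 * (2:ℝ)^(-(cfSum a (t+1):ℤ)) / 8)
      atTop (𝓝 0) := by
    apply squeeze_zero (fun t => ?_) hw
    · have := hslope0.abs
      simpa using this
    · have hp := zpow_pos (two_pos (α := ℝ)) (-(cfSum a (t+1):ℤ))
      have hq := hqqR t
      positivity
  -- eventually S(t+1) ≥ κ₁ (t+1)
  have hphi := CF.one_lt_phi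
  have hphipos := CF.phi_pos
  have hlog2 : (0:ℝ) < Real.log 2 := Real.log_pos one_lt_two
  have heps : (0:ℝ) < ((Phi^4)⁻¹)/8 := by positivity
  obtain ⟨T0, hT0⟩ := Filter.eventually_atTop.1 (hw0.eventually_lt_const heps)
  have hSbound : ∀ t, T0 ≤ t → kappa1 * ((t:ℝ)+1) ≤ (cfSum a (t+1) : ℝ) := by
    intro t hT
    have h := hT0 t hT
    have hq := hqqR t
    have hp := zpow_pos (two_pos (α := ℝ)) (-(cfSum a (t+1):ℤ))
    have h8 : (CF.qq a t : ℝ)^2 * (2:ℝ)^(-(cfSum a (t+1):ℤ)) < (Phi^4)⁻¹ := by linarith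
    have hlog := Real.log_lt_log (by positivity) h8
    rw [Real.log_mul (by positivity) (ne_of_gt hp), Real.log_pow, Real.log_zpow,
      Real.log_inv, Real.log_pow] at hlog
    have hlq := CF.log_qq_ge hapos t
    -- hlog : 2 * log qq + (-(S)) * log 2 < -(4 * log Phi)
    push_cast at hlog
    have hkey : 2 * ((t:ℝ)+1) * Real.log Phi < (cfSum a (t+1) : ℝ) * Real.log 2 := by
      nlinarith
    rw [kappa1]
    rw [div_mul_eq_mul_div, div_le_iff₀ hlog2]
    nlinarith
  -- conclusion
  refine ⟨T0 + 1, ?_⟩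
  intro t s hTs hst
  have hφ : ∀ u : ℕ, T0 + 1 ≤ u → kappa1 * (u:ℝ) ≤ (cfSum a u : ℝ) := by
    intro u hu
    obtain ⟨v, rfl⟩ : ∃ v, u = v + 1 := ⟨u - 1, by omega⟩
    have := hSbound v (by omega)
    push_cast
    push_cast at this
    linarith
  have hs1 := hφ s (by omega)
  have ht1 := hφ t (by omega)
  by_cases hc : (cfSum a s : ℝ) - kappa1 * s ≤ (cfSum a t : ℝ) - kappa1 * t
  · refine ⟨t, by omega, le_refl t, ?_⟩
    rw [abs_of_nonneg (by linarith)]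
    linarith
  · refine ⟨s, by omega, by omega, ?_⟩
    rw [abs_of_nonpos (by linarith)]
    linarith
end
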